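/- arXiv:1612.04476 — 4 statements merged into one kernel-verified Lean document; each statement's English description precedes it below -/
import Mathlib

section
/- Let n ≥ 4, 1 < k < n−1, τ = (1 2 ... n), φ the reversal of {1,...,k}, and π = τφτ⁻¹φ. If k is even, then π is the (k+1)-cycle (1 3 5 ... k+1 2 4 ... k); if k is odd, then π is the product of the two disjoint (k+1)/2-cycles (1 3 5 ... k)(2 4 ... k+1). -/
/-- The flip of the oval track puzzle: reverses the block of the first `k`
positions (0-indexed `0,…,k-1`, i.e. tiles `1,…,k`) and fixes the rest. -/
def otFlip (n k : ℕ) : Equiv.Perm (Fin n) :=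
  Function.Involutive.toPerm
    (fun i => if h : i.val < k ∧ k ≤ n then ⟨k - 1 - i.val, by omega⟩ else i)
    (by
      intro i
      dsimp only
      by_cases h1 : i.val < k ∧ k ≤ n
      · rw [dif_pos h1]
        rw [dif_pos (show (⟨k - 1 - i.val, by omega⟩ : Fin n).val < k ∧ k ≤ n from
          ⟨by simp; omega, h1.2⟩)]
        exact Fin.ext (by simp; omega)
      · rw [dif_neg h1, dif_neg h1])

/-- The cycle on `Fin n` given (0-indexed) by a list of natural numbers. -/
def otCycle (n : ℕ) (l : List ℕ) : Equiv.Perm (Fin n) :=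
  (l.filterMap (fun a => if h : a < n then some ⟨a, h⟩ else none)).formPerm

/-- Type I: preserves the parity of every tile label. -/
def TypeI (n : ℕ) (σ : Equiv.Perm (Fin n)) : Prop :=
  ∀ i : Fin n, (σ i).val % 2 = i.val % 2

/-- Type II: reverses the parity of every tile label. -/
def TypeII (n : ℕ) (σ : Equiv.Perm (Fin n)) : Prop :=
  ∀ i : Fin n, (σ i).val % 2 ≠ i.val % 2



lemma filterMap_fin (n : ℕ) : ∀ (l : List ℕ) (H : ∀ a ∈ l, a < n),
    l.filterMap (fun a => if h : a < n then some (⟨a, h⟩ : Fin n) else none) =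
      l.pmap (fun a h => (⟨a, h⟩ : Fin n)) H
  | [], _ => rfl
  | a :: l, H => by
    rw [List.filterMap_cons, List.pmap, dif_pos (H a List.mem_cons_self),
      filterMap_fin n l (fun b hb => H b (List.mem_cons_of_mem a hb))]

lemma otCycle_val (n : ℕ) (l : List ℕ) (H : ∀ a ∈ l, a < n) (hnd : l.Nodup)
    (m : ℕ) (hm : m < l.length) (x : Fin n) (hx : x.val = l[m]) :
    (otCycle n l x).val = l[(m + 1) % l.length]'(Nat.mod_lt _ (by omega)) := by
  unfold otCycle
  rw [filterMap_fin n l H]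
  have hnd' : (l.pmap (fun a h => (⟨a, h⟩ : Fin n)) H).Nodup :=
    hnd.pmap (fun a ha b hb h => by injection h)
  have hm' : m < (l.pmap (fun a h => (⟨a, h⟩ : Fin n)) H).length := by
    simpa using hm
  have hxe : x = (l.pmap (fun a h => (⟨a, h⟩ : Fin n)) H)[m] := by
    apply Fin.ext
    simp [List.getElem_pmap, hx]
  rw [hxe, List.formPerm_apply_getElem _ hnd' m hm']
  simp [List.getElem_pmap]

lemma otCycle_fix (n : ℕ) (l : List ℕ) (x : Fin n) (hx : x.val ∉ l) :
    otCycle n l x = x := by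
  unfold otCycle
  apply List.formPerm_apply_of_notMem
  simp only [List.mem_filterMap]
  rintro ⟨a, ha, h⟩
  split at h
  · cases h; exact hx ha
  · cases h

lemma mod_helper1 (a m : ℕ) (h : a < m + 1) :
    (a + m) % (m + 1) = if a = 0 then m else a - 1 := by
  split_ifs with h0
  · subst h0; simp [Nat.mod_eq_of_lt]
  · rw [show a + m = (a - 1) + (m + 1) by omega, Nat.add_mod_right,
      Nat.mod_eq_of_lt (by omega)]

lemma mod_helper2 (a m : ℕ) (h : a < m + 1) :
    (a + 1) % (m + 1) = if a = m then 0 else a + 1 := by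
  split_ifs with h0
  · subst h0; simp
  · rw [Nat.mod_eq_of_lt (by omega)]

lemma otFlip_val (n k : ℕ) (hkn : k ≤ n) (x : Fin n) :
    ((otFlip n k) x).val = if x.val < k then k - 1 - x.val else x.val := by
  rw [otFlip]
  change (if h : x.val < k ∧ k ≤ n then (⟨k - 1 - x.val, by omega⟩ : Fin n) else x).val = _
  by_cases h : x.val < k
  · rw [dif_pos ⟨h, hkn⟩, if_pos h]
  · rw [dif_neg (fun hc => h hc.1), if_neg h]

-- test statement pieces

lemma lhs_apply (n k : ℕ) (hn : 4 ≤ n) (hk1 : 1 < k) (hk2 : k < n - 1) (i : Fin n) :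
    ((finRotate n * otFlip n k * (finRotate n)⁻¹ * otFlip n k) i).val =
      if i.val < k - 1 then i.val + 2 else if i.val = k - 1 then 0
      else if i.val = k then 1 else i.val := by
  obtain ⟨m, rfl⟩ : ∃ m, n = m + 1 := ⟨n - 1, by omega⟩
  have hkn : k ≤ m + 1 := by omega
  have hrot : ∀ x : Fin (m + 1), ((finRotate (m + 1)) x).val = (x.val + 1) % (m + 1) := by
    intro x
    rw [finRotate_succ_apply, Fin.val_add, Fin.val_one',
      Nat.mod_eq_of_lt (show 1 < m + 1 by omega)]
  have hinv : ∀ x : Fin (m + 1), (((finRotate (m + 1))⁻¹) x).val = (x.val + m) % (m + 1) := by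
    intro x
    have h1 : ((finRotate (m + 1))⁻¹) x = x - 1 := by
      rw [Equiv.Perm.inv_def, Equiv.symm_apply_eq, finRotate_succ_apply, sub_add_cancel]
    rw [h1, Fin.coe_sub, Fin.val_one', Nat.mod_eq_of_lt (show 1 < m + 1 by omega)]
    have hx := x.isLt
    rw [show m + 1 - 1 + x.val = x.val + m by omega]
  have hi := i.isLt
  simp only [Equiv.Perm.mul_apply, hrot, hinv, otFlip_val (m+1) k hkn]
  rw [mod_helper1 _ m (by split_ifs <;> omega)]
  rw [mod_helper2 _ m (by split_ifs <;> omega)]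
  split_ifs <;> omega

theorem stmt10 (n k : ℕ) (hn : 4 ≤ n) (hk1 : 1 < k) (hk2 : k < n - 1) :
    (Even k →
      finRotate n * otFlip n k * (finRotate n)⁻¹ * otFlip n k =
        otCycle n ((List.range (k / 2 + 1)).map (fun j => 2 * j) ++
          (List.range (k / 2)).map (fun j => 2 * j + 1))) ∧
    (Odd k →
      finRotate n * otFlip n k * (finRotate n)⁻¹ * otFlip n k =
        otCycle n ((List.range ((k + 1) / 2)).map (fun j => 2 * j)) *
          otCycle n ((List.range ((k + 1) / 2)).map (fun j => 2 * j + 1))) := by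
  constructor
  · intro hke'
    have hke : k % 2 = 0 := Nat.even_iff.mp hke'
    set L : List ℕ := (List.range (k / 2 + 1)).map (fun j => 2 * j) ++
      (List.range (k / 2)).map (fun j => 2 * j + 1) with hL
    have hH : ∀ a ∈ L, a < n := by
      intro a ha
      simp only [hL, List.mem_append, List.mem_map, List.mem_range] at ha
      rcases ha with ⟨j, hj, rfl⟩ | ⟨j, hj, rfl⟩ <;> omega
    have hlen : L.length = k + 1 := by
      simp only [hL, List.length_append, List.length_map, List.length_range]
      omega
    have hnd : L.Nodup := by
      apply List.Nodup.append
      · exact (List.nodup_range).map (fun a b h => by omega)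
      · exact (List.nodup_range).map (fun a b h => by omega)
      · intro a ha hb
        simp only [List.mem_map, List.mem_range] at ha hb
        obtain ⟨j1, _, h1⟩ := ha
        obtain ⟨j2, _, h2⟩ := hb
        omega
    have hget : ∀ (m : ℕ) (hm : m < L.length),
        L[m] = if m < k / 2 + 1 then 2 * m else 2 * (m - (k / 2 + 1)) + 1 := by
      intro m hm
      simp only [hL, List.getElem_append, List.length_map, List.length_range,
        List.getElem_map, List.getElem_range]
      split_ifs <;> rfl
    refine Equiv.ext fun i => Fin.ext ?_
    rw [lhs_apply n k hn hk1 hk2 i]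
    have hi := i.isLt
    by_cases hik : i.val ≤ k
    · set m : ℕ := if i.val % 2 = 0 then i.val / 2 else k / 2 + 1 + i.val / 2 with hmdef
      have hm : m < L.length := by rw [hlen, hmdef]; split_ifs <;> omega
      have hx : i.val = L[m] := by rw [hget m hm, hmdef]; split_ifs <;> omega
      rw [otCycle_val n L hH hnd m hm i hx, hget _ (Nat.mod_lt _ (by omega)), hlen,
        mod_helper2 m k (by rw [hmdef]; split_ifs <;> omega)]
      rw [hmdef]
      split_ifs <;> omega
    · rw [otCycle_fix n L i (by
        intro hmem
        simp only [hL, List.mem_append, List.mem_map, List.mem_range] at hmem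
        rcases hmem with ⟨j, hj, h⟩ | ⟨j, hj, h⟩ <;> omega)]
      split_ifs <;> omega
  · intro hko'
    have hko : k % 2 = 1 := Nat.odd_iff.mp hko'
    set q : ℕ := (k + 1) / 2 with hq
    set L1 : List ℕ := (List.range q).map (fun j => 2 * j) with hL1
    set L2 : List ℕ := (List.range q).map (fun j => 2 * j + 1) with hL2
    have hH1 : ∀ a ∈ L1, a < n := by
      intro a ha
      simp only [hL1, List.mem_map, List.mem_range] at ha
      obtain ⟨j, hj, rfl⟩ := ha; omega
    have hH2 : ∀ a ∈ L2, a < n := by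
      intro a ha
      simp only [hL2, List.mem_map, List.mem_range] at ha
      obtain ⟨j, hj, rfl⟩ := ha; omega
    have hlen1 : L1.length = q := by simp [hL1]
    have hlen2 : L2.length = q := by simp [hL2]
    have hnd1 : L1.Nodup := (List.nodup_range).map (fun a b h => by omega)
    have hnd2 : L2.Nodup := (List.nodup_range).map (fun a b h => by omega)
    have hget1 : ∀ (m : ℕ) (hm : m < L1.length), L1[m] = 2 * m := by
      intro m hm
      simp only [hL1, List.getElem_map, List.getElem_range]
    have hget2 : ∀ (m : ℕ) (hm : m < L2.length), L2[m] = 2 * m + 1 := by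
      intro m hm
      simp only [hL2, List.getElem_map, List.getElem_range]
    have hnm1 : ∀ x : Fin n, x.val % 2 = 1 → otCycle n L1 x = x := by
      intro x hxp
      refine otCycle_fix n L1 x ?_
      intro hmem
      simp only [hL1, List.mem_map, List.mem_range] at hmem
      obtain ⟨j, hj, h⟩ := hmem; omega
    have hnm2 : ∀ x : Fin n, x.val % 2 = 0 → otCycle n L2 x = x := by
      intro x hxp
      refine otCycle_fix n L2 x ?_
      intro hmem
      simp only [hL2, List.mem_map, List.mem_range] at hmem
      obtain ⟨j, hj, h⟩ := hmem; omega
    refine Equiv.ext fun i => Fin.ext ?_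
    rw [lhs_apply n k hn hk1 hk2 i, Equiv.Perm.mul_apply]
    have hi := i.isLt
    by_cases hik : i.val ≤ k
    · by_cases hpar : i.val % 2 = 0
      · -- even: fixed by c2, moved by c1
        rw [hnm2 i hpar]
        set m : ℕ := i.val / 2 with hmdef
        have hm : m < L1.length := by rw [hlen1]; omega
        have hx : i.val = L1[m] := by rw [hget1 m hm]; omega
        rw [otCycle_val n L1 hH1 hnd1 m hm i hx, hget1 _ (Nat.mod_lt _ (by omega)), hlen1]
        rw [show q = (q - 1) + 1 by omega, mod_helper2 m (q - 1) (by omega)]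
        split_ifs <;> omega
      · -- odd: moved by c2, result fixed by c1
        set m : ℕ := i.val / 2 with hmdef
        have hm : m < L2.length := by rw [hlen2]; omega
        have hx : i.val = L2[m] := by rw [hget2 m hm]; omega
        have hv : (otCycle n L2 i).val =
            if m = q - 1 then 1 else 2 * (m + 1) + 1 := by
          rw [otCycle_val n L2 hH2 hnd2 m hm i hx, hget2 _ (Nat.mod_lt _ (by omega)), hlen2]
          rw [show q = (q - 1) + 1 by omega, mod_helper2 m (q - 1) (by omega)]
          split_ifs <;> omega
        rw [hnm1 _ (by rw [hv]; split_ifs <;> omega), hv]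
        split_ifs <;> omega
    · rw [otCycle_fix n L2 i (by
          intro hmem
          simp only [hL2, List.mem_map, List.mem_range] at hmem
          obtain ⟨j, hj, h⟩ := hmem; omega),
        otCycle_fix n L1 i (by
          intro hmem
          simp only [hL1, List.mem_map, List.mem_range] at hmem
          obtain ⟨j, hj, h⟩ := hmem; omega)]
      split_ifs <;> omega
end

section
/- Let n ≥ 4, 1 < k < n−1 with k even, and π = τφτ⁻¹φ the shuffle. Then π^{k/2} is the consecutive (k+1)-cycle (k+1 k k−1 ... 2 1). -/
set_option maxHeartbeats 1000000 in
lemma filterMap_eq_pmap' (n : ℕ) (l : List ℕ) (H : ∀ a ∈ l, a < n) :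
    l.filterMap (fun a => if h : a < n then some (⟨a, h⟩ : Fin n) else none)
      = l.pmap (fun a h => (⟨a, h⟩ : Fin n)) H := by
  induction l with
  | nil => rfl
  | cons a l ih =>
    rw [List.filterMap_cons, List.pmap, dif_pos (H a (List.mem_cons_self)),
      ih (fun b hb => H b (List.mem_cons_of_mem _ hb))]


theorem stmt12 (n k : ℕ) (hn : 4 ≤ n) (hk1 : 1 < k) (hk2 : k < n - 1)
    (hke : Even k) :
    (finRotate n * otFlip n k * (finRotate n)⁻¹ * otFlip n k) ^ (k / 2) =
      otCycle n (List.range (k + 1)).reverse := by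
  obtain ⟨m, rfl⟩ : ∃ m, n = m + 1 := ⟨n - 1, by omega⟩
  have hkm : k + 1 < m + 1 := by omega
  set M : List (Fin (m+1)) := (List.range (k+1)).pmap (fun a h => ⟨a, h⟩)
      (fun a ha => lt_trans (List.mem_range.mp ha) hkm) with hM
  have hlen : M.length = k + 1 := by simp [hM]
  have hget : ∀ (i : ℕ) (h : i < M.length), M[i] = ⟨i, by rw [hlen] at h; omega⟩ := by
    intro i h
    exact Fin.ext (by simp [hM, List.getElem_pmap])
  have hnd : M.Nodup :=
    List.Nodup.pmap (fun a _ b _ hab => Fin.mk.inj_iff.mp hab) List.nodup_range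
  have hmem : ∀ x : Fin (m+1), x ∈ M ↔ x.val < k + 1 := by
    intro x
    constructor
    · intro hx
      rw [hM, List.mem_pmap] at hx
      obtain ⟨a, ha, rfl⟩ := hx
      simpa using List.mem_range.mp ha
    · intro hx
      rw [hM, List.mem_pmap]
      exact ⟨x.val, List.mem_range.mpr hx, Fin.ext rfl⟩
  set d := M.formPerm with hd
  have hdlt : ∀ (x : Fin (m+1)) (hx : x.val < k), d x = ⟨x.val + 1, by omega⟩ := by
    intro x hx
    have h' : x.val < M.length := by rw [hlen]; omega
    have hx' : x = M[x.val] := (hget x.val h').symm ▸ Fin.ext rfl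
    conv_lhs => rw [hx']
    rw [hd, List.formPerm_apply_getElem M hnd x.val h', hget]
    exact Fin.ext (by simp only [Fin.val_mk, hlen]; exact Nat.mod_eq_of_lt (by omega))
  have hdk : ∀ (x : Fin (m+1)), x.val = k → d x = ⟨0, by omega⟩ := by
    intro x hx
    have h' : x.val < M.length := by rw [hlen]; omega
    have hx' : x = M[x.val] := (hget x.val h').symm ▸ Fin.ext rfl
    conv_lhs => rw [hx']
    rw [hd, List.formPerm_apply_getElem M hnd x.val h', hget]
    exact Fin.ext (by simp only [Fin.val_mk, hlen, hx, Nat.mod_self])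
  have hdge : ∀ (x : Fin (m+1)), k + 1 ≤ x.val → d x = x := by
    intro x hx
    exact List.formPerm_apply_of_notMem (by rw [hmem]; omega)
  have hRHS : otCycle (m+1) (List.range (k + 1)).reverse = d⁻¹ := by
    rw [otCycle, List.filterMap_reverse,
      filterMap_eq_pmap' (m+1) (List.range (k+1))
        (fun a ha => lt_trans (List.mem_range.mp ha) hkm),
      ← hM, List.formPerm_reverse, hd]
  rw [hRHS]
  -- helpers for finRotate
  have hone : (1 : ℕ) % (m+1) = 1 := Nat.mod_eq_of_lt (by omega)
  have htau : ∀ (v : ℕ) (h : v < m), finRotate (m+1) ⟨v, by omega⟩ = ⟨v+1, by omega⟩ := by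
    intro v h
    rw [finRotate_succ_apply]
    exact Fin.ext (by
      rw [Fin.val_add, Fin.val_one', hone]
      simp only [Fin.val_mk]
      exact Nat.mod_eq_of_lt (by omega))
  have htaum : finRotate (m+1) ⟨m, by omega⟩ = ⟨0, by omega⟩ := by
    rw [finRotate_succ_apply]
    exact Fin.ext (by rw [Fin.val_add, Fin.val_one', hone]; simp only [Fin.val_mk, Nat.mod_self])
  have htauinv : ∀ (v w : Fin (m+1)), w.val + 1 = v.val → (finRotate (m+1))⁻¹ v = w := by
    intro v w h
    apply (finRotate (m+1)).injective
    rw [← Equiv.Perm.mul_apply, mul_inv_cancel, Equiv.Perm.one_apply, finRotate_succ_apply]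
    exact Fin.ext (by simp only [Fin.val_add, Fin.val_one', hone, Fin.val_mk]; rw [Nat.mod_eq_of_lt (by omega), h])
  have htauinv0 : ∀ (v : Fin (m+1)), v.val = 0 → (finRotate (m+1))⁻¹ v = ⟨m, by omega⟩ := by
    intro v h
    apply (finRotate (m+1)).injective
    rw [← Equiv.Perm.mul_apply, mul_inv_cancel, Equiv.Perm.one_apply, finRotate_succ_apply]
    exact Fin.ext (by simp only [Fin.val_add, Fin.val_one', hone, Fin.val_mk, h]; simp)
  -- π = d * d
  have hpi : finRotate (m+1) * otFlip (m+1) k * (finRotate (m+1))⁻¹ * otFlip (m+1) k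
      = d * d := by
    refine Equiv.ext fun x => ?_
    simp only [Equiv.Perm.mul_apply, otFlip, Function.Involutive.toPerm, Equiv.coe_fn_mk]
    rcases lt_trichotomy x.val (k-1) with h1 | h1 | h1
    · -- x.val < k - 1
      rw [dif_pos (show x.val < k ∧ k ≤ m + 1 by omega)]
      rw [htauinv ⟨k - 1 - x.val, by omega⟩ ⟨k - 2 - x.val, by omega⟩
        (by simp only [Fin.val_mk]; omega)]
      rw [dif_pos (show (⟨k - 2 - x.val, by omega⟩ : Fin (m+1)).val < k ∧ k ≤ m + 1 from
        ⟨by simp only [Fin.val_mk]; omega, by omega⟩)]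
      rw [show (⟨k - 1 - (⟨k - 2 - x.val, by omega⟩ : Fin (m+1)).val, by
          simp only [Fin.val_mk]; omega⟩ : Fin (m+1)) = ⟨x.val + 1, by omega⟩ from
        Fin.ext (by simp only [Fin.val_mk]; omega)]
      rw [htau (x.val + 1) (by omega)]
      rw [hdlt x (by omega), hdlt ⟨x.val + 1, by omega⟩ (by simp only [Fin.val_mk]; omega)]
    · -- x.val = k - 1
      rw [dif_pos (show x.val < k ∧ k ≤ m + 1 by omega)]
      rw [htauinv0 ⟨k - 1 - x.val, by omega⟩ (by simp only [Fin.val_mk]; omega)]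
      rw [dif_neg (show ¬((⟨m, by omega⟩ : Fin (m+1)).val < k ∧ k ≤ m + 1) by
        simp only [Fin.val_mk]; omega)]
      rw [htaum]
      rw [hdlt x (by omega), hdk ⟨x.val + 1, by omega⟩ (by simp only [Fin.val_mk]; omega)]
    · -- x.val > k - 1
      rcases eq_or_lt_of_le (show k ≤ x.val by omega) with h2 | h2
      · -- x.val = k
        rw [dif_neg (show ¬(x.val < k ∧ k ≤ m + 1) by omega)]
        rw [htauinv x ⟨k - 1, by omega⟩ (by simp only [Fin.val_mk]; omega)]
        rw [dif_pos (show (⟨k - 1, by omega⟩ : Fin (m+1)).val < k ∧ k ≤ m + 1 from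
          ⟨by simp only [Fin.val_mk]; omega, by omega⟩)]
        rw [show (⟨k - 1 - (⟨k - 1, by omega⟩ : Fin (m+1)).val, by
            simp only [Fin.val_mk]; omega⟩ : Fin (m+1)) = ⟨0, by omega⟩ from
          Fin.ext (by simp only [Fin.val_mk]; omega)]
        rw [htau 0 (by omega)]
        rw [hdk x (by omega), hdlt ⟨0, by omega⟩ (by simp only [Fin.val_mk]; omega)]
      · -- x.val > k
        rw [dif_neg (show ¬(x.val < k ∧ k ≤ m + 1) by omega)]
        rw [htauinv x ⟨x.val - 1, by omega⟩ (by simp only [Fin.val_mk]; omega)]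
        rw [dif_neg (show ¬((⟨x.val - 1, by omega⟩ : Fin (m+1)).val < k ∧ k ≤ m + 1) by
          simp only [Fin.val_mk]; omega)]
        rw [htau (x.val - 1) (by omega)]
        rw [hdge x (by omega), hdge x (by omega)]
        exact Fin.ext (by simp only [Fin.val_mk]; omega)
  rw [hpi]
  have hdk1 : d ^ (k + 1) = 1 := by
    rw [← hlen]; exact List.formPerm_pow_length_eq_one_of_nodup M hnd
  obtain ⟨j, hj⟩ := hke
  have : (d * d) ^ (k / 2) = d ^ k := by
    rw [← pow_two, ← pow_mul]
    congr 1
    omega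
  rw [this]
  refine eq_inv_of_mul_eq_one_left ?_
  rw [← pow_succ, hdk1]
end

section
/- Let n ≥ 4, 1 < k < n−1 with n − k even, π = τφτ⁻¹φ, and ρ = φτ. Then π⁻¹(τρ^{n−k})² is the 3-cycle (k−1 k k+1). -/
lemma myFlipVal (n k : ℕ) (hk : k ≤ n) (i : Fin n) :
    (otFlip n k i).val = if i.val < k then k - 1 - i.val else i.val := by
  show ((if h : i.val < k ∧ k ≤ n then (⟨k - 1 - i.val, by omega⟩ : Fin n) else i)).val = _
  by_cases h : i.val < k
  · rw [dif_pos ⟨h, hk⟩, if_pos h]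
  · rw [dif_neg (by tauto), if_neg h]

lemma myRotVal (n : ℕ) (i : Fin n) :
    (finRotate n i).val = if i.val = n - 1 then 0 else i.val + 1 := by
  cases n with
  | zero => exact i.elim0
  | succ m =>
    rw [finRotate_succ_apply, Fin.val_add_one]
    have : (i = Fin.last m) ↔ (i.val = m + 1 - 1) := by
      simp [Fin.ext_iff, Fin.last]
    split_ifs with h1 h2 h2 <;> simp_all

lemma myRotInvVal (n : ℕ) (i : Fin n) :
    ((finRotate n)⁻¹ i).val = if i.val = 0 then n - 1 else i.val - 1 := by
  have hn : 0 < n := i.pos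
  have : (finRotate n)⁻¹ i = ⟨if i.val = 0 then n - 1 else i.val - 1, by have := i.isLt; split_ifs <;> omega⟩ := by
    rw [Equiv.Perm.inv_def, Equiv.symm_apply_eq]
    apply Fin.ext
    rw [myRotVal]
    have := i.isLt
    simp only
    split_ifs <;> omega
  rw [this]

lemma myRhoVal (n k : ℕ) (hn : 4 ≤ n) (hk1 : 1 < k) (hk2 : k < n - 1) (i : Fin n) :
    ((otFlip n k * finRotate n) i).val =
      if i.val = n - 1 then k - 1
      else if i.val + 1 < k then k - 2 - i.val
      else i.val + 1 := by
  rw [Equiv.Perm.mul_apply, myFlipVal n k (by omega), myRotVal]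
  have := i.isLt
  split_ifs <;> omega

lemma myRhoPowVal (n k : ℕ) (hn : 4 ≤ n) (hk1 : 1 < k) (hk2 : k < n - 1) (m : ℕ) :
    2 * m ≤ n - k → ∀ i : Fin n,
      (((otFlip n k * finRotate n) ^ (2 * m)) i).val =
        if i.val < k - 1 then i.val
        else if i.val + 2 * m ≤ n - 1 then i.val + 2 * m
        else i.val + 2 * m - (n - k + 1) := by
  induction m with
  | zero =>
    intro _ i
    have := i.isLt
    simp only [Nat.mul_zero, pow_zero, Equiv.Perm.one_apply]
    split_ifs <;> omega
  | succ m ih =>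
    intro hm i
    have h2 : 2 * (m + 1) = 2 * m + 2 := by ring
    rw [h2, pow_add, Equiv.Perm.mul_apply, pow_two, Equiv.Perm.mul_apply]
    have v1 := myRhoVal n k hn hk1 hk2 i
    have v2 := myRhoVal n k hn hk1 hk2 ((otFlip n k * finRotate n) i)
    have v3 := ih (by omega) ((otFlip n k * finRotate n) ((otFlip n k * finRotate n) i))
    rw [v3, v2, v1]
    have := i.isLt
    split_ifs <;> omega

set_option maxHeartbeats 2000000 in
theorem stmt13 (n k : ℕ) (hn : 4 ≤ n) (hk1 : 1 < k) (hk2 : k < n - 1)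
    (hnk : Even (n - k)) :
    (finRotate n * otFlip n k * (finRotate n)⁻¹ * otFlip n k)⁻¹ *
        (finRotate n * (otFlip n k * finRotate n) ^ (n - k)) ^ 2 =
      otCycle n [k - 2, k - 1, k] := by
  obtain ⟨c, hc⟩ := hnk
  have hc2 : n - k = 2 * c := by omega
  -- value of S = τ * ρ^(n-k)
  have hS : ∀ i : Fin n,
      ((finRotate n * (otFlip n k * finRotate n) ^ (n - k)) i).val =
        if i.val < k - 1 then i.val + 1
        else if i.val = k - 1 then 0
        else i.val := by
    intro i
    rw [Equiv.Perm.mul_apply, hc2]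
    have v1 := myRhoPowVal n k hn hk1 hk2 c (by omega) i
    have v2 := myRotVal n (((otFlip n k * finRotate n) ^ (2 * c)) i)
    rw [v2, v1]
    have := i.isLt
    split_ifs <;> omega
  -- value of π = τφτ⁻¹φ
  have hπ : ∀ i : Fin n,
      ((finRotate n * otFlip n k * (finRotate n)⁻¹ * otFlip n k) i).val =
        if i.val < k - 1 then i.val + 2
        else if i.val = k - 1 then 0
        else if i.val = k then 1
        else i.val := by
    intro i
    simp only [Equiv.Perm.mul_apply]
    have v1 := myFlipVal n k (by omega) i
    have v2 := myRotInvVal n (otFlip n k i)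
    have v3 := myFlipVal n k (by omega) ((finRotate n)⁻¹ (otFlip n k i))
    have v4 := myRotVal n (otFlip n k ((finRotate n)⁻¹ (otFlip n k i)))
    rw [v4, v3, v2, v1]
    have := i.isLt
    split_ifs <;> omega
  -- value of the cycle
  have e : (([k-2, k-1, k].filterMap
      (fun a => if h : a < n then some (⟨a, h⟩ : Fin n) else none))) =
      [⟨k-2, by omega⟩, ⟨k-1, by omega⟩, ⟨k, by omega⟩] := by
    simp only [List.filterMap_cons, List.filterMap_nil,
      dif_pos (show k - 2 < n by omega), dif_pos (show k - 1 < n by omega),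
      dif_pos (show k < n by omega)]
  have hC : ∀ i : Fin n, (otCycle n [k-2, k-1, k] i).val =
      if i.val = k - 2 then k - 1
      else if i.val = k - 1 then k
      else if i.val = k then k - 2
      else i.val := by
    intro i
    rw [otCycle, e, List.formPerm_cons_cons, List.formPerm_cons_cons,
      List.formPerm_singleton]
    have ha : ∀ (x : Fin n) (a : ℕ) (h : a < n), (x = ⟨a, h⟩) = (x.val = a) := by
      intro x a h
      simp [Fin.ext_iff]
    simp only [Equiv.Perm.mul_apply, mul_one, Equiv.swap_apply_def, ha,
      apply_ite Fin.val]
    split_ifs <;> omega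
  rw [inv_mul_eq_iff_eq_mul, pow_two]
  ext i
  show ((finRotate n * (otFlip n k * finRotate n) ^ (n - k))
        ((finRotate n * (otFlip n k * finRotate n) ^ (n - k)) i)).val =
      ((finRotate n * otFlip n k * (finRotate n)⁻¹ * otFlip n k)
        ((otCycle n [k - 2, k - 1, k]) i)).val
  have h1 := hS i
  have h2 := hS ((finRotate n * (otFlip n k * finRotate n) ^ (n - k)) i)
  have h3 := hC i
  have h4 := hπ (otCycle n [k-2, k-1, k] i)
  rw [h2, h4, h1, h3]
  have := i.isLt
  split_ifs <;> omega
end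

section
/- Let n ≥ 4, 1 < k < n−1 with k odd, and π = τφτ⁻¹φ. Then πτπ⁻¹τ⁻¹ is the 3-cycle (1 3 k+2). -/
lemma rot_val (n : ℕ) (hn : 0 < n) (i : Fin n) :
    ((finRotate n) i).val = if i.val + 1 = n then 0 else i.val + 1 := by
  obtain ⟨m, rfl⟩ : ∃ m, n = m + 1 := ⟨n - 1, by omega⟩
  rw [finRotate_succ_apply, Fin.val_add_one]
  rcases eq_or_ne i (Fin.last m) with h | h
  · simp [h, Fin.last]
  · rw [if_neg h, if_neg]
    intro hc
    exact h (Fin.ext (by simpa [Fin.last] using by omega))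

lemma rot_inv_val (n : ℕ) (hn : 0 < n) (i : Fin n) :
    (((finRotate n))⁻¹ i).val = if i.val = 0 then n - 1 else i.val - 1 := by
  set j := (finRotate n)⁻¹ i with hj
  have h1 : (finRotate n) j = i := by rw [hj]; exact Equiv.apply_symm_apply _ _
  have h2 := rot_val n hn j
  rw [h1] at h2
  have := j.isLt
  have := i.isLt
  split_ifs at h2 ⊢ <;> omega

lemma flip_val (n k : ℕ) (i : Fin n) :
    (otFlip n k i).val = if i.val < k ∧ k ≤ n then k - 1 - i.val else i.val := by
  rw [otFlip]
  show (if h : i.val < k ∧ k ≤ n then (⟨k - 1 - i.val, by omega⟩ : Fin n) else i).val = _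
  split_ifs with h
  · rfl
  · rfl

lemma flip_inv (n k : ℕ) : (otFlip n k)⁻¹ = otFlip n k := by
  rw [otFlip]
  exact Function.Involutive.toPerm_symm _


lemma rot_val' (n : ℕ) (hn : 0 < n) (i : Fin n) :
    (i.val + 1 = n ∧ ((finRotate n) i).val = 0) ∨
    (i.val + 1 < n ∧ ((finRotate n) i).val = i.val + 1) := by
  have h := rot_val n hn i
  have := i.isLt
  split_ifs at h <;> [left; right] <;> omega

lemma rot_inv_val' (n : ℕ) (hn : 0 < n) (i : Fin n) :
    (i.val = 0 ∧ (((finRotate n))⁻¹ i).val = n - 1) ∨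
    (0 < i.val ∧ (((finRotate n))⁻¹ i).val = i.val - 1) := by
  have h := rot_inv_val n hn i
  split_ifs at h <;> [left; right] <;> omega

lemma flip_val' (n k : ℕ) (hkn : k ≤ n) (i : Fin n) :
    (i.val < k ∧ (otFlip n k i).val = k - 1 - i.val) ∨
    (k ≤ i.val ∧ (otFlip n k i).val = i.val) := by
  have h := flip_val n k i
  split_ifs at h with hc
  · exact Or.inl ⟨hc.1, h⟩
  · exact Or.inr ⟨by omega, h⟩

set_option maxHeartbeats 4000000 in
theorem stmt15 (n k : ℕ) (hn : 4 ≤ n) (hk1 : 1 < k) (hk2 : k < n - 1)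
    (hko : Odd k) :
    (finRotate n * otFlip n k * (finRotate n)⁻¹ * otFlip n k) * finRotate n *
        (finRotate n * otFlip n k * (finRotate n)⁻¹ * otFlip n k)⁻¹ * (finRotate n)⁻¹ =
      otCycle n [0, 2, k + 1] := by
  have hn0 : 0 < n := by omega
  have hkn : k ≤ n := by omega
  have hrhs : otCycle n [0, 2, k + 1] =
      Equiv.swap ⟨0, by omega⟩ ⟨2, by omega⟩ * Equiv.swap ⟨2, by omega⟩ ⟨k+1, by omega⟩ := by
    rw [otCycle]
    rw [show List.filterMap (fun a => if h : a < n then some (⟨a, h⟩ : Fin n) else none) [0,2,k+1]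
      = [⟨0, by omega⟩, ⟨2, by omega⟩, ⟨k+1, by omega⟩] by
        simp only [List.filterMap_cons, List.filterMap_nil]
        rw [dif_pos (by omega : 0 < n), dif_pos (by omega : 2 < n), dif_pos (by omega : k+1 < n)]]
    rw [List.formPerm_cons_cons, List.formPerm_cons_cons, List.formPerm_singleton, mul_one]
  rw [hrhs, mul_inv_rev, mul_inv_rev, mul_inv_rev, flip_inv, inv_inv]
  ext i
  have hi := i.isLt
  simp only [Equiv.Perm.mul_apply]
  set a1 := (finRotate n)⁻¹ i with ha1
  have h1 := rot_inv_val' n hn0 i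
  rw [← ha1] at h1
  set a2 := (finRotate n)⁻¹ a1 with ha2
  have h2 := rot_inv_val' n hn0 a1
  rw [← ha2] at h2
  set a3 := otFlip n k a2 with ha3
  have h3 := flip_val' n k hkn a2
  rw [← ha3] at h3
  set a4 := finRotate n a3 with ha4
  have h4 := rot_val' n hn0 a3
  rw [← ha4] at h4
  set a5 := otFlip n k a4 with ha5
  have h5 := flip_val' n k hkn a4
  rw [← ha5] at h5
  set a6 := finRotate n a5 with ha6
  have h6 := rot_val' n hn0 a5
  rw [← ha6] at h6
  set a7 := otFlip n k a6 with ha7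
  have h7 := flip_val' n k hkn a6
  rw [← ha7] at h7
  set a8 := (finRotate n)⁻¹ a7 with ha8
  have h8 := rot_inv_val' n hn0 a7
  rw [← ha8] at h8
  set a9 := otFlip n k a8 with ha9
  have h9 := flip_val' n k hkn a8
  rw [← ha9] at h9
  set a10 := finRotate n a9 with ha10
  have h10 := rot_val' n hn0 a9
  rw [← ha10] at h10
  have b1 := a1.isLt
  have b2 := a2.isLt
  have b3 := a3.isLt
  have b4 := a4.isLt
  have b5 := a5.isLt
  have b6 := a6.isLt
  have b7 := a7.isLt
  have b8 := a8.isLt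
  have b9 := a9.isLt
  clear_value a1 a2 a3 a4 a5 a6 a7 a8 a9 a10
  obtain ⟨m, hm⟩ := hko
  clear ha1 ha2 ha3 ha4 ha5 ha6 ha7 ha8 ha9 ha10 hrhs
  simp only [Equiv.swap_apply_def, apply_ite (Fin.val), Fin.ext_iff]
  split_ifs <;> first | exact absurd rfl (by assumption) | exact (False.elim (by assumption)) | omega
end
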